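/- Given the bounds v_b ≥ r_b/(n0*n1*npod) and v_g ≤ (1/(n1*n2*npod)) * (n0(npod-1)/(n0*npod-1)) * [(4 - k/n0) r_g + (k/n0) r_b], if r_b ≥ α r_g with α = n0(4n0 - k)(npod-1) / (n2(n0*npod - 1) - n0(npod-1)k) and k < n2(n0*npod-1)/(n0(npod-1)), then v_b ≥ v_g. -/
import Mathlib


/-- Given the bounds `vb ≥ rb/(n0*n1*npod)` and
`vg ≤ (1/(n1*n2*npod)) * (n0(npod-1)/(n0*npod-1)) * [(4 - k/n0) rg + (k/n0) rb]`,
if `rb ≥ α rg` with `α = n0(4n0-k)(npod-1)/(n2(n0*npod-1) - n0(npod-1)k)` and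
`k < n2(n0*npod-1)/(n0(npod-1))`, then `vb ≥ vg`. -/
theorem snr_implies_ranking
    (n0 n1 n2 npod k : ℕ)
    (h0 : 1 ≤ n0) (h1 : 1 ≤ n1) (h2 : 1 ≤ n2) (hp : 2 ≤ npod)
    (rb rg vb vg : ℝ)
    (hrg0 : 0 ≤ rg) (hrg1 : rg ≤ 1) (hrb0 : 0 ≤ rb) (hrb1 : rb ≤ 1)
    (hk : (k : ℝ) < (n2 : ℝ) * ((n0 : ℝ) * npod - 1) / ((n0 : ℝ) * ((npod : ℝ) - 1)))
    (hvb : vb ≥ rb / ((n0 : ℝ) * n1 * npod))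
    (hvg : vg ≤ (1 / ((n1 : ℝ) * n2 * npod)) *
        (((n0 : ℝ) * ((npod : ℝ) - 1)) / ((n0 : ℝ) * npod - 1)) *
        ((4 - (k : ℝ) / n0) * rg + ((k : ℝ) / n0) * rb))
    (hsnr : rb ≥ ((n0 : ℝ) * (4 * (n0 : ℝ) - k) * ((npod : ℝ) - 1)) /
        ((n2 : ℝ) * ((n0 : ℝ) * npod - 1) - (n0 : ℝ) * ((npod : ℝ) - 1) * k) * rg) :
    vb ≥ vg := by
  have hn0 : (1:ℝ) ≤ (n0:ℝ) := by exact_mod_cast h0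
  have hn1 : (1:ℝ) ≤ (n1:ℝ) := by exact_mod_cast h1
  have hn2 : (1:ℝ) ≤ (n2:ℝ) := by exact_mod_cast h2
  have hnp : (2:ℝ) ≤ (npod:ℝ) := by exact_mod_cast hp
  have hP1 : (1:ℝ) ≤ (npod:ℝ) - 1 := by linarith
  have hq : (0:ℝ) < (n0:ℝ) * ((npod:ℝ) - 1) := by nlinarith
  have hm : (0:ℝ) < (n0:ℝ) * (npod:ℝ) - 1 := by nlinarith
  have hD : (0:ℝ) < (n2:ℝ) * ((n0:ℝ) * npod - 1) - (n0:ℝ) * ((npod:ℝ) - 1) * k := by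
    have := (lt_div_iff₀ hq).1 hk
    nlinarith
  have key : (n0:ℝ) * (4 * (n0:ℝ) - k) * ((npod:ℝ) - 1) * rg ≤
      rb * ((n2:ℝ) * ((n0:ℝ) * npod - 1) - (n0:ℝ) * ((npod:ℝ) - 1) * k) := by
    rw [ge_iff_le, div_mul_eq_mul_div, div_le_iff₀ hD] at hsnr
    linarith
  have hmid : (1 / ((n1 : ℝ) * n2 * npod)) *
      (((n0 : ℝ) * ((npod : ℝ) - 1)) / ((n0 : ℝ) * npod - 1)) *
      ((4 - (k : ℝ) / n0) * rg + ((k : ℝ) / n0) * rb) ≤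
      rb / ((n0 : ℝ) * n1 * npod) := by
    have h0' : (0:ℝ) < (n0:ℝ) := by linarith
    have h1' : (0:ℝ) < (n1:ℝ) := by linarith
    have h2' : (0:ℝ) < (n2:ℝ) := by linarith
    have hp' : (0:ℝ) < (npod:ℝ) := by linarith
    have expand : (1 / ((n1 : ℝ) * n2 * npod)) *
        (((n0 : ℝ) * ((npod : ℝ) - 1)) / ((n0 : ℝ) * npod - 1)) *
        ((4 - (k : ℝ) / n0) * rg + ((k : ℝ) / n0) * rb) =
        ((n0:ℝ) * ((npod:ℝ) - 1) * ((4 * (n0:ℝ) - k) * rg + (k:ℝ) * rb)) /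
        ((n1:ℝ) * n2 * npod * ((n0:ℝ) * npod - 1) * n0) := by
      field_simp
    have key2 : (n0:ℝ) * ((npod:ℝ) - 1) * ((4 * (n0:ℝ) - k) * rg + (k:ℝ) * rb) ≤
        rb * ((n2:ℝ) * ((n0:ℝ) * npod - 1)) := by linarith [key]
    rw [expand, div_le_div_iff₀ (by positivity) (by positivity)]
    have hpos : (0:ℝ) ≤ (n1:ℝ) * npod * n0 := by positivity
    linarith [mul_le_mul_of_nonneg_left key2 hpos]
  linarith
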